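/- For real symmetric positive semi-definite matrices A and B, tr(A + B − 2(A^{1/2} B A^{1/2})^{1/2}) ≤ ‖A^{1/2} − B^{1/2}‖_F², where ‖·‖_F is the Frobenius norm. -/

import Mathlib

open Classical Matrix

/-- The positive semidefinite square root of a real matrix (junk value `0` if not PSD). -/
noncomputable def psdSqrt {n : ℕ} (A : Matrix (Fin n) (Fin n) ℝ) : Matrix (Fin n) (Fin n) ℝ :=
  if h : A.PosSemidef then
    (h.1.eigenvectorUnitary : Matrix (Fin n) (Fin n) ℝ) *
      diagonal ((↑) ∘ (h.1.eigenvalues · |>.sqrt)) *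
      (star h.1.eigenvectorUnitary : Matrix (Fin n) (Fin n) ℝ)
  else 0

/-- The Frobenius norm of a square real matrix. -/
noncomputable def frobNorm {n : ℕ} (M : Matrix (Fin n) (Fin n) ℝ) : ℝ :=
  Real.sqrt (Mᵀ * M).trace

/-- The PSD square root (port of the removed Mathlib definition). -/
noncomputable def Matrix.PosSemidef.sqrt {n : ℕ} {A : Matrix (Fin n) (Fin n) ℝ}
    (h : A.PosSemidef) : Matrix (Fin n) (Fin n) ℝ :=
  (h.1.eigenvectorUnitary : Matrix (Fin n) (Fin n) ℝ) *
    diagonal ((↑) ∘ (h.1.eigenvalues · |>.sqrt)) *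
    (star h.1.eigenvectorUnitary : Matrix (Fin n) (Fin n) ℝ)

lemma Matrix.PosSemidef.posSemidef_sqrt {n : ℕ} {A : Matrix (Fin n) (Fin n) ℝ}
    (h : A.PosSemidef) : h.sqrt.PosSemidef := by
  unfold Matrix.PosSemidef.sqrt
  have hd : (diagonal ((↑) ∘ (h.1.eigenvalues · |>.sqrt)) :
      Matrix (Fin n) (Fin n) ℝ).PosSemidef := by
    rw [posSemidef_diagonal_iff]
    intro i
    simp [Real.sqrt_nonneg]
  have := hd.mul_mul_conjTranspose_same (h.1.eigenvectorUnitary : Matrix (Fin n) (Fin n) ℝ)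
  simpa [Matrix.star_eq_conjTranspose] using this

lemma Matrix.PosSemidef.sqrt_mul_self {n : ℕ} {A : Matrix (Fin n) (Fin n) ℝ}
    (h : A.PosSemidef) : h.sqrt * h.sqrt = A := by
  unfold Matrix.PosSemidef.sqrt
  set U : Matrix (Fin n) (Fin n) ℝ := (h.1.eigenvectorUnitary : Matrix (Fin n) (Fin n) ℝ)
  have hUU' : star U * U = 1 := (Matrix.mem_unitaryGroup_iff').mp h.1.eigenvectorUnitary.2
  have hsp := h.1.spectral_theorem
  rw [Unitary.conjStarAlgAut_apply] at hsp
  conv_rhs => rw [hsp]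
  calc U * diagonal ((↑) ∘ (h.1.eigenvalues · |>.sqrt)) * star U *
        (U * diagonal ((↑) ∘ (h.1.eigenvalues · |>.sqrt)) * star U)
      = U * (diagonal ((↑) ∘ (h.1.eigenvalues · |>.sqrt)) * (star U * U) *
          diagonal ((↑) ∘ (h.1.eigenvalues · |>.sqrt))) * star U := by
        simp only [Matrix.mul_assoc]
    _ = _ := by
        rw [hUU', Matrix.mul_one, diagonal_mul_diagonal]
        congr 3
        funext i
        simp [Real.mul_self_sqrt (h.eigenvalues_nonneg i)]

/-- Key inequality: `tr M ≤ tr √(M Mᴴ)` for any real square matrix `M`. -/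
lemma trace_le_trace_sqrt {n : ℕ} (M : Matrix (Fin n) (Fin n) ℝ) :
    M.trace ≤ (posSemidef_self_mul_conjTranspose M).sqrt.trace := by
  set h : (M * Mᴴ).PosSemidef := posSemidef_self_mul_conjTranspose M
  set U : Matrix (Fin n) (Fin n) ℝ := (h.1.eigenvectorUnitary : Matrix (Fin n) (Fin n) ℝ) with hU
  have hUU : U * star U = 1 := (Matrix.mem_unitaryGroup_iff).mp h.1.eigenvectorUnitary.2
  have hUU' : star U * U = 1 := (Matrix.mem_unitaryGroup_iff').mp h.1.eigenvectorUnitary.2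
  -- trace of the sqrt is the sum of sqrts of eigenvalues
  have htr : h.sqrt.trace = ∑ i, Real.sqrt (h.1.eigenvalues i) := by
    rw [Matrix.PosSemidef.sqrt, trace_mul_comm, ← mul_assoc, hUU', one_mul, trace_diagonal]
    simp [Function.comp]
  -- conjugated matrix
  set N : Matrix (Fin n) (Fin n) ℝ := star U * M * U with hN
  have htrN : N.trace = M.trace := by
    rw [hN, trace_mul_comm, ← mul_assoc, hUU, one_mul]
  have hNN : N * Nᴴ = Matrix.diagonal (RCLike.ofReal ∘ h.1.eigenvalues) := by
    have : Nᴴ = star U * Mᴴ * U := by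
      rw [hN, Matrix.conjTranspose_mul, Matrix.conjTranspose_mul,
        Matrix.star_eq_conjTranspose U, Matrix.conjTranspose_conjTranspose, Matrix.mul_assoc]
    rw [this, hN]
    calc star U * M * U * (star U * Mᴴ * U)
        = star U * (M * (U * star U) * Mᴴ) * U := by
          simp only [Matrix.mul_assoc]
      _ = star U * (M * Mᴴ) * U := by rw [hUU]; simp [Matrix.mul_assoc]
      _ = _ := by
        have := h.1.conjStarAlgAut_star_eigenvectorUnitary
        simpa [hU] using this
  -- diagonal entries bound
  have hdiag : ∀ i, N i i ≤ Real.sqrt (h.1.eigenvalues i) := by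
    intro i
    have h1 : (N i i) ^ 2 ≤ h.1.eigenvalues i := by
      have := congrFun (congrFun hNN i) i
      simp only [Matrix.mul_apply, Matrix.diagonal_apply_eq, Function.comp_apply,
        RCLike.ofReal_real_eq_id, id] at this
      have h3 : N i i * Nᴴ i i = N i i ^ 2 := by
        simp [Matrix.conjTranspose_apply, sq]
      calc (N i i) ^ 2 = N i i * Nᴴ i i := h3.symm
        _ ≤ ∑ j, N i j * Nᴴ j i := by
            refine Finset.single_le_sum (f := fun j => N i j * Nᴴ j i) (fun j _ => ?_) (Finset.mem_univ i)
            simp only [Matrix.conjTranspose_apply, star_trivial]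
            exact mul_self_nonneg _
        _ = h.1.eigenvalues i := this
    calc N i i ≤ |N i i| := le_abs_self _
      _ = Real.sqrt ((N i i) ^ 2) := (Real.sqrt_sq_eq_abs _).symm
      _ ≤ Real.sqrt (h.1.eigenvalues i) := Real.sqrt_le_sqrt h1
  calc M.trace = N.trace := htrN.symm
    _ = ∑ i, N i i := rfl
    _ ≤ ∑ i, Real.sqrt (h.1.eigenvalues i) := Finset.sum_le_sum fun i _ => hdiag i
    _ = h.sqrt.trace := htr.symm

/-- For real symmetric PSD matrices `A`, `B`:
`tr(A + B − 2 (A^{1/2} B A^{1/2})^{1/2}) ≤ ‖A^{1/2} − B^{1/2}‖_F²`. -/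
theorem bures_le_frobenius_sq {n : ℕ}
    (A B : Matrix (Fin n) (Fin n) ℝ) (hA : A.PosSemidef) (hB : B.PosSemidef) :
    (A + B - (2 : ℝ) • psdSqrt (psdSqrt A * B * psdSqrt A)).trace
      ≤ frobNorm (psdSqrt A - psdSqrt B) ^ 2 := by
  have hSA : psdSqrt A = hA.sqrt := dif_pos hA
  have hSB : psdSqrt B = hB.sqrt := dif_pos hB
  set Sa := hA.sqrt with hSa
  set Sb := hB.sqrt with hSb
  have hSaH : Saᴴ = Sa := hA.posSemidef_sqrt.1
  have hSbH : Sbᴴ = Sb := hB.posSemidef_sqrt.1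
  set M := Sa * Sb with hM
  have hMMt : M * Mᴴ = Sa * B * Sa := by
    rw [hM, Matrix.conjTranspose_mul, hSaH, hSbH]
    calc Sa * Sb * (Sb * Sa) = Sa * (Sb * Sb) * Sa := by simp [Matrix.mul_assoc]
      _ = Sa * B * Sa := by rw [hB.sqrt_mul_self]
  have hSC : psdSqrt (psdSqrt A * B * psdSqrt A)
      = (posSemidef_self_mul_conjTranspose M).sqrt := by
    rw [hSA, ← hMMt]
    exact dif_pos (posSemidef_self_mul_conjTranspose M)
  -- key inequality
  have key : M.trace ≤ (posSemidef_self_mul_conjTranspose M).sqrt.trace :=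
    trace_le_trace_sqrt M
  -- RHS computation
  have hXnn : (0:ℝ) ≤ ((Sa - Sb)ᵀ * (Sa - Sb)).trace := by
    rw [Matrix.trace]
    refine Finset.sum_nonneg fun i _ => ?_
    rw [Matrix.diag_apply, Matrix.mul_apply]
    exact Finset.sum_nonneg fun j _ => by
      simp only [Matrix.transpose_apply]
      exact mul_self_nonneg _
  have hfrob : frobNorm (psdSqrt A - psdSqrt B) ^ 2 = ((Sa - Sb)ᵀ * (Sa - Sb)).trace := by
    rw [frobNorm, hSA, hSB, Real.sq_sqrt hXnn]
  have hSaT : Saᵀ = Sa := by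
    have := hSaH; rwa [Matrix.conjTranspose_eq_transpose_of_trivial] at this
  have hSbT : Sbᵀ = Sb := by
    have := hSbH; rwa [Matrix.conjTranspose_eq_transpose_of_trivial] at this
  have hexp : ((Sa - Sb)ᵀ * (Sa - Sb)).trace = A.trace + B.trace - 2 * M.trace := by
    rw [Matrix.transpose_sub, hSaT, hSbT, Matrix.sub_mul, Matrix.mul_sub, Matrix.mul_sub,
      Matrix.trace_sub, Matrix.trace_sub, Matrix.trace_sub, hA.sqrt_mul_self, hB.sqrt_mul_self,
      hM]
    have : (Sb * Sa).trace = (Sa * Sb).trace := trace_mul_comm Sb Sa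
    rw [this]; ring
  rw [hfrob, hexp, hSC, Matrix.trace_sub, Matrix.trace_add, Matrix.trace_smul]
  simp only [smul_eq_mul]
  linarith [key]
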